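/- Let L be a modular lattice, let u ≤ v in L, and let a, b be elements of the dimension monoid Dim L. If a + b = Δ(u,v), then there exist a positive integer n and a chain u = w₀ ≤ w₁ ≤ ⋯ ≤ w_{2n} = v in L such that a = Σ_{i<n} Δ(w_{2i}, w_{2i+1}) and b = Σ_{i<n} Δ(w_{2i+1}, w_{2i+2}). -/

import Mathlib

section Dim

variable (L : Type*) [Lattice L]

/-- Generators of the dimension monoid: pairs `x ≤ y` in `L`. -/
abbrev DimGen := {p : L × L // p.1 ≤ p.2}

/-- The free commutative monoid on the generators. -/
abbrev DimFree := DimGen L →₀ ℕ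

/-- The defining relations (D0), (D1), (D2) of the dimension monoid. -/
inductive DimRel : DimFree L → DimFree L → Prop
  | d0 (x : L) : DimRel (Finsupp.single ⟨(x, x), le_rfl⟩ 1) 0
  | d1 (x y z : L) (hxy : x ≤ y) (hyz : y ≤ z) :
      DimRel (Finsupp.single ⟨(x, z), hxy.trans hyz⟩ 1)
        (Finsupp.single ⟨(x, y), hxy⟩ 1 + Finsupp.single ⟨(y, z), hyz⟩ 1)
  | d2 (x y : L) : DimRel (Finsupp.single ⟨(x ⊓ y, x), inf_le_left⟩ 1)
        (Finsupp.single ⟨(y, x ⊔ y), le_sup_right⟩ 1)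

/-- The smallest monoid congruence containing the defining relations. -/
noncomputable def DimCon : AddCon (DimFree L) := addConGen (DimRel L)

/-- The dimension monoid of a lattice `L`. -/
abbrev DimMonoid := (DimCon L).Quotient

variable {L}

/-- The extended generator `Δ(x,y) := Δ(x ⊓ y, x ⊔ y)` of the dimension monoid. -/
noncomputable def dimDelta (x y : L) : DimMonoid L :=
  (DimCon L).mk' (Finsupp.single ⟨(x ⊓ y, x ⊔ y), inf_le_sup⟩ 1)

end Dim



section Aux

variable {L : Type*} [Lattice L]

/-- all generators via the inf/sup normal form -/
def mkGen (x y : L) : DimGen L := ⟨(x ⊓ y, x ⊔ y), inf_le_sup⟩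

lemma genEq {x y : L} (h : x ≤ y) : (⟨(x, y), h⟩ : DimGen L) = mkGen x y := by
  simp [mkGen, Subtype.ext_iff, Prod.ext_iff, inf_eq_left.2 h, sup_eq_right.2 h]

lemma gen_eq_mkGen (g : DimGen L) : g = mkGen g.1.1 g.1.2 := by
  obtain ⟨⟨x, y⟩, h⟩ := g; exact genEq h

@[simp] lemma mkGen_fst {x y : L} (h : x ≤ y) : (mkGen x y).1.1 = x := inf_eq_left.2 h
@[simp] lemma mkGen_snd {x y : L} (h : x ≤ y) : (mkGen x y).1.2 = y := sup_eq_right.2 h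

/-- perspectivity of intervals -/
def Persp (g h : DimGen L) : Prop := ∃ x y : L, g = mkGen (x ⊓ y) x ∧ h = mkGen y (x ⊔ y)

/-- projectivity: equivalence closure of perspectivity -/
def Proj : DimGen L → DimGen L → Prop := Relation.EqvGen (Persp (L := L))

lemma proj_refl (g : DimGen L) : Proj g g := Relation.EqvGen.refl g
lemma proj_symm {g h : DimGen L} (h1 : Proj g h) : Proj h g := Relation.EqvGen.symm _ _ h1
lemma proj_trans {g h k : DimGen L} (h1 : Proj g h) (h2 : Proj h k) : Proj g k :=
  Relation.EqvGen.trans _ _ _ h1 h2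
lemma persp_proj {g h : DimGen L} (h1 : Persp g h) : Proj g h := Relation.EqvGen.rel _ _ h1

instance : IsTrans (DimGen L) Proj := ⟨fun _ _ _ => proj_trans⟩

/-- chain from x to y given as its list of links -/
inductive ChainList : L → L → List (DimGen L) → Prop
  | nil (x : L) : ChainList x x []
  | cons (x y z : L) (h : x ≤ y) (l : List (DimGen L)) (hl : ChainList y z l) :
      ChainList x z (mkGen x y :: l)

lemma ChainList.le {x y : L} {l : List (DimGen L)} (h : ChainList x y l) : x ≤ y := by
  induction h with
  | nil => exact le_rfl
  | cons x y z h l hl ih => exact h.trans ih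

lemma ChainList.append {x y z : L} {l₁ l₂ : List (DimGen L)}
    (h₁ : ChainList x y l₁) (h₂ : ChainList y z l₂) : ChainList x z (l₁ ++ l₂) := by
  induction h₁ with
  | nil => simpa
  | cons x m _ h l hl ih => exact ChainList.cons _ _ _ h _ (ih h₂)

/-- g is subdivided by chain c -/
def GC (g : DimGen L) (c : List (DimGen L)) : Prop := ChainList g.1.1 g.1.2 c

lemma GC_of_chain {x y : L} (h : x ≤ y) {c : List (DimGen L)} (hc : ChainList x y c) :
    GC (mkGen x y) c := by
  unfold GC; rwa [mkGen_fst h, mkGen_snd h]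

lemma GC_self (g : DimGen L) : GC g [g] := by
  have := ChainList.cons g.1.1 g.1.2 g.1.2 g.2 [] (ChainList.nil g.1.2)
  unfold GC
  rwa [← gen_eq_mkGen] at this

/-- S is a subdivision of M : every generator of M replaced by the links of a chain -/
def chainsSum (C : Multiset (List (DimGen L))) : Multiset (DimGen L) :=
  (C.map Multiset.ofList).sum

@[simp] lemma chainsSum_zero : chainsSum (0 : Multiset (List (DimGen L))) = 0 := rfl

@[simp] lemma chainsSum_cons (c : List (DimGen L)) (C : Multiset (List (DimGen L))) :
    chainsSum (c ::ₘ C) = ↑c + chainsSum C := by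
  simp [chainsSum]

@[simp] lemma chainsSum_add (C D : Multiset (List (DimGen L))) :
    chainsSum (C + D) = chainsSum C + chainsSum D := by
  simp [chainsSum]

def Subdiv (M S : Multiset (DimGen L)) : Prop :=
  ∃ C : Multiset (List (DimGen L)), Multiset.Rel GC M C ∧ S = chainsSum C

lemma subdiv_zero : Subdiv (0 : Multiset (DimGen L)) 0 := ⟨0, Multiset.Rel.zero, by simp⟩

lemma subdiv_cons {g : DimGen L} {c : List (DimGen L)} {M S : Multiset (DimGen L)}
    (hg : GC g c) (hM : Subdiv M S) : Subdiv (g ::ₘ M) (↑c + S) := by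
  obtain ⟨C, h1, rfl⟩ := hM
  exact ⟨c ::ₘ C, h1.cons hg, by simp⟩

lemma subdiv_add {M N S T : Multiset (DimGen L)} (hM : Subdiv M S) (hN : Subdiv N T) :
    Subdiv (M + N) (S + T) := by
  obtain ⟨C, h1, rfl⟩ := hM
  obtain ⟨D, h2, rfl⟩ := hN
  exact ⟨C + D, h1.add h2, by simp⟩

lemma subdiv_refl (M : Multiset (DimGen L)) : Subdiv M M := by
  induction M using Multiset.induction_on with
  | empty => exact subdiv_zero
  | cons g M ih => simpa using subdiv_cons (GC_self g) ih

lemma subdiv_single {g : DimGen L} {c : List (DimGen L)} (hg : GC g c) :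
    Subdiv {g} (↑c) := by simpa using subdiv_cons hg subdiv_zero

lemma subdiv_zero_left {S : Multiset (DimGen L)} (h : Subdiv 0 S) : S = 0 := by
  obtain ⟨C, h1, rfl⟩ := h
  rw [Multiset.rel_zero_left] at h1; subst h1; simp

lemma subdiv_cons_left {g : DimGen L} {M S : Multiset (DimGen L)} (h : Subdiv (g ::ₘ M) S) :
    ∃ c S', GC g c ∧ Subdiv M S' ∧ S = ↑c + S' := by
  obtain ⟨C, h1, rfl⟩ := h
  obtain ⟨c, C', hgc, hMC, rfl⟩ := Multiset.rel_cons_left.1 h1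
  exact ⟨c, _, hgc, ⟨C', hMC, rfl⟩, by simp⟩

lemma subdiv_add_left {M N S : Multiset (DimGen L)} (h : Subdiv (M + N) S) :
    ∃ SM SN, Subdiv M SM ∧ Subdiv N SN ∧ S = SM + SN := by
  obtain ⟨C, h1, rfl⟩ := h
  obtain ⟨CM, CN, hM, hN, rfl⟩ := Multiset.rel_add_left.1 h1
  exact ⟨_, _, ⟨CM, hM, rfl⟩, ⟨CN, hN, rfl⟩, by simp⟩

end Aux
section Transfer

variable {L : Type*} [Lattice L] [IsModularLattice L]

lemma forall₂_rel {c d : List (DimGen L)} (h : List.Forall₂ Proj c d) :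
    Multiset.Rel Proj (c : Multiset (DimGen L)) (d : Multiset (DimGen L)) := by
  induction h with
  | nil => exact Multiset.Rel.zero
  | cons hab _ ih => simpa using ih.cons hab

lemma rel_proj_symm {S T : Multiset (DimGen L)} (h : Multiset.Rel Proj S T) :
    Multiset.Rel Proj T S := by
  induction h with
  | zero => exact Multiset.Rel.zero
  | cons hab _ ih => exact ih.cons (proj_symm hab)

lemma forall₂_proj_trans {c d e : List (DimGen L)} (h1 : List.Forall₂ Proj c d)
    (h2 : List.Forall₂ Proj d e) : List.Forall₂ Proj c e := by
  induction h1 generalizing e with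
  | nil => cases h2; exact List.Forall₂.nil
  | cons hab h ih =>
    cases h2 with
    | cons hbc h2' => exact List.Forall₂.cons (proj_trans hab hbc) (ih h2')

/-- transfer a chain upwards along a transposition -/
lemma chain_up {p q : L} {c : List (DimGen L)} (hc : ChainList p q c) :
    ∀ y : L, q ⊓ y ≤ p → ∃ d, ChainList (p ⊔ y) (q ⊔ y) d ∧ List.Forall₂ Proj c d := by
  induction hc with
  | nil x => exact fun y _ => ⟨[], ChainList.nil _, List.Forall₂.nil⟩
  | cons p m q h l hl ih =>
    intro y hq
    obtain ⟨d, hd, hf⟩ := ih y (hq.trans h)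
    have hym : y ⊓ m ≤ p := by
      refine le_trans (inf_le_inf_left y hl.le) ?_
      rwa [inf_comm]
    have e1 : m ⊓ (p ⊔ y) = p := by
      rw [inf_comm, sup_inf_assoc_of_le y h]
      exact sup_eq_left.2 hym
    have e2 : m ⊔ (p ⊔ y) = m ⊔ y := by
      rw [← sup_assoc, sup_eq_left.2 h]
    have key : Persp (mkGen p m) (mkGen (p ⊔ y) (m ⊔ y)) := by
      refine ⟨m, p ⊔ y, ?_, ?_⟩
      · rw [e1]
      · rw [e2]
    exact ⟨mkGen (p ⊔ y) (m ⊔ y) :: d,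
      ChainList.cons _ _ _ (sup_le_sup_right h y) _ hd,
      List.Forall₂.cons (persp_proj key) hf⟩

/-- transfer a chain downwards along a transposition -/
lemma chain_down {p q : L} {c : List (DimGen L)} (hc : ChainList p q c) :
    ∀ x : L, q ≤ x ⊔ p → ∃ d, ChainList (p ⊓ x) (q ⊓ x) d ∧ List.Forall₂ Proj c d := by
  induction hc with
  | nil _ => exact fun x _ => ⟨[], ChainList.nil _, List.Forall₂.nil⟩
  | cons p m q h l hl ih =>
    intro x hq
    obtain ⟨d, hd, hf⟩ := ih x (hq.trans (sup_le_sup_left h x))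
    have e1 : m ⊓ x ⊓ p = p ⊓ x := by
      rw [inf_comm p x, inf_assoc, inf_comm x p, ← inf_assoc, inf_eq_right.2 h, inf_comm]
    have e2 : m ⊓ x ⊔ p = m := by
      rw [inf_sup_assoc_of_le x h]
      exact inf_eq_left.2 (hl.le.trans hq)
    have key : Persp (mkGen (p ⊓ x) (m ⊓ x)) (mkGen p m) := by
      refine ⟨m ⊓ x, p, ?_, ?_⟩
      · rw [e1]
      · rw [e2]
    exact ⟨mkGen (p ⊓ x) (m ⊓ x) :: d,
      ChainList.cons _ _ _ (inf_le_inf_right x h) _ hd,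
      List.Forall₂.cons (proj_symm (persp_proj key)) hf⟩

/-- projective intervals transfer chains, in both directions -/
lemma proj_chain {g h : DimGen L} (hgh : Proj g h) :
    (∀ c, GC g c → ∃ d, GC h d ∧ List.Forall₂ Proj c d) ∧
    (∀ c, GC h c → ∃ d, GC g d ∧ List.Forall₂ Proj c d) := by
  induction hgh with
  | rel g h hp =>
    obtain ⟨x, y, rfl, rfl⟩ := hp
    constructor
    · intro c hc
      have hc' : ChainList (x ⊓ y) x c := by
        unfold GC at hc
        rwa [mkGen_fst inf_le_left, mkGen_snd inf_le_left] at hc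
      obtain ⟨d, hd, hf⟩ := chain_up hc' y le_rfl
      rw [sup_eq_right.2 inf_le_right] at hd
      exact ⟨d, GC_of_chain le_sup_right hd, hf⟩
    · intro c hc
      have hc' : ChainList y (x ⊔ y) c := by
        unfold GC at hc
        rwa [mkGen_fst le_sup_right, mkGen_snd le_sup_right] at hc
      obtain ⟨d, hd, hf⟩ := chain_down hc' x (by rw [sup_comm x y])
      rw [inf_eq_right.2 (le_sup_left : x ≤ x ⊔ y), inf_comm y x] at hd
      exact ⟨d, GC_of_chain inf_le_left hd, hf⟩
  | refl g =>
    constructor <;> exact fun c hc => ⟨c, hc, List.forall₂_same.2 fun a _ => proj_refl a⟩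
  | symm g h _ ih => exact ⟨ih.2, ih.1⟩
  | trans g h k _ _ ih1 ih2 =>
    constructor
    · intro c hc
      obtain ⟨d, hd, hf⟩ := ih1.1 c hc
      obtain ⟨e, he, hf'⟩ := ih2.1 d hd
      exact ⟨e, he, forall₂_proj_trans hf hf'⟩
    · intro c hc
      obtain ⟨d, hd, hf⟩ := ih2.2 c hc
      obtain ⟨e, he, hf'⟩ := ih1.2 d hd
      exact ⟨e, he, forall₂_proj_trans hf hf'⟩

end Transfer
section Schreier

variable {L : Type*} [Lattice L] [IsModularLattice L]

lemma chain_degenerate {p q : L} {c : List (DimGen L)} (hc : ChainList p q c) (hqp : q ≤ p) :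
    Subdiv (c : Multiset (DimGen L)) 0 := by
  induction hc with
  | nil x => simpa using subdiv_zero
  | cons p m q h l hl ih =>
    have hmp : m = p := le_antisymm (hl.le.trans hqp) h
    subst hmp
    have h0 : GC (mkGen m m) ([] : List (DimGen L)) := by
      unfold GC
      rw [mkGen_fst le_rfl, mkGen_snd le_rfl]
      exact ChainList.nil m
    have := subdiv_cons h0 (ih hqp)
    simpa using this

lemma chainSubdiv {x y : L} {l : List (DimGen L)} (hl : ChainList x y l) :
    ∀ T, Subdiv (l : Multiset (DimGen L)) T → ∃ l', ChainList x y l' ∧ (l' : Multiset (DimGen L)) = T := by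
  induction hl with
  | nil x =>
    intro T hT
    rw [Multiset.coe_nil] at hT
    exact ⟨[], ChainList.nil x, by rw [subdiv_zero_left hT]; rfl⟩
  | cons x m y h l hl ih =>
    intro T hT
    rw [← Multiset.cons_coe] at hT
    obtain ⟨c, S', hgc, hS', rfl⟩ := subdiv_cons_left hT
    have hc : ChainList x m c := by
      unfold GC at hgc
      rwa [mkGen_fst h, mkGen_snd h] at hgc
    obtain ⟨l'', hl'', rfl⟩ := ih S' hS'
    exact ⟨c ++ l'', hc.append hl'', by simp⟩

lemma subdiv_trans_aux {M : Multiset (DimGen L)} {C : Multiset (List (DimGen L))}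
    (hrel : Multiset.Rel GC M C) :
    ∀ T, Subdiv (chainsSum C) T → Subdiv M T := by
  induction hrel with
  | zero =>
    intro T h2
    rw [chainsSum_zero] at h2
    rw [subdiv_zero_left h2]
    exact subdiv_zero
  | @cons g c M C hgc hrel ih =>
    intro T h2
    rw [chainsSum_cons] at h2
    obtain ⟨Tc, T₀, hTc, hT₀, rfl⟩ := subdiv_add_left h2
    obtain ⟨c', hc', rfl⟩ := chainSubdiv hgc Tc hTc
    exact subdiv_cons hc' (ih T₀ hT₀)

lemma subdiv_trans {M S T : Multiset (DimGen L)} (h1 : Subdiv M S) (h2 : Subdiv S T) :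
    Subdiv M T := by
  obtain ⟨C, hrel, rfl⟩ := h1
  exact subdiv_trans_aux hrel T h2

lemma transfer {S T : Multiset (DimGen L)} (h : Multiset.Rel Proj S T) :
    ∀ T₂, Subdiv T T₂ → ∃ S₂, Subdiv S S₂ ∧ Multiset.Rel Proj S₂ T₂ := by
  induction h with
  | zero =>
    intro T₂ hT₂
    rw [subdiv_zero_left hT₂]
    exact ⟨0, subdiv_zero, Multiset.Rel.zero⟩
  | @cons g h S' T' hgh hrel ih =>
    intro T₂ hT₂
    obtain ⟨c, T₂', hgc, hT₂', rfl⟩ := subdiv_cons_left hT₂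
    obtain ⟨d, hd, hf⟩ := (proj_chain hgh).2 c hgc
    obtain ⟨S₂', hS₂', hrel'⟩ := ih T₂' hT₂'
    exact ⟨↑d + S₂', subdiv_cons hd hS₂',
      (rel_proj_symm (forall₂_rel hf)).add hrel'⟩

/-- Cut a chain from `p` to `q` at a level `m ≤ q`. -/
lemma cut {p q : L} {c : List (DimGen L)} (hc : ChainList p q c) :
    ∀ m : L, m ≤ q → ∃ (cl ch : List (DimGen L)) (S : Multiset (DimGen L)),
      ChainList (p ⊓ m) m cl ∧ ChainList (p ⊔ m) q ch ∧
      Subdiv (c : Multiset (DimGen L)) S ∧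
      Multiset.Rel Proj ((cl : Multiset (DimGen L)) + (ch : Multiset (DimGen L))) S := by
  induction hc with
  | nil x =>
    intro m hm
    refine ⟨[], [], 0, ?_, ?_, by simpa using subdiv_zero, by simp⟩
    · rw [inf_eq_right.2 hm]; exact ChainList.nil m
    · rw [sup_eq_left.2 hm]; exact ChainList.nil x
  | cons p d q h l hl ih =>
    intro m hm
    obtain ⟨cl', ch', S', hcl', hch', hS', hrel'⟩ := ih m hm
    -- the two new links
    have hdm : d ⊓ m ≤ d := inf_le_left
    have hpd : p ≤ p ⊔ d ⊓ m := le_sup_left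
    have hmid : p ⊔ d ⊓ m ≤ d := sup_le h inf_le_left
    -- perspectivities
    have key1 : Persp (mkGen (p ⊓ m) (d ⊓ m)) (mkGen p (p ⊔ d ⊓ m)) := by
      refine ⟨d ⊓ m, p, ?_, ?_⟩
      · rw [show d ⊓ m ⊓ p = p ⊓ m by
          rw [inf_comm d m, inf_assoc, inf_eq_right.2 h, inf_comm]]
      · rw [sup_comm (d ⊓ m) p]
    have key2 : Persp (mkGen (p ⊔ d ⊓ m) d) (mkGen (p ⊔ m) (d ⊔ m)) := by
      refine ⟨d, p ⊔ m, ?_, ?_⟩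
      · rw [show d ⊓ (p ⊔ m) = p ⊔ d ⊓ m by
          rw [inf_comm, sup_inf_assoc_of_le m h, inf_comm m d]]
      · rw [show d ⊔ (p ⊔ m) = d ⊔ m by rw [← sup_assoc, sup_eq_left.2 h]]
    -- the subdivision of the first link into two
    have hsub : GC (mkGen p d) ([mkGen p (p ⊔ d ⊓ m), mkGen (p ⊔ d ⊓ m) d] : List (DimGen L)) := by
      refine GC_of_chain h ?_
      exact ChainList.cons _ _ _ hpd _ (ChainList.cons _ _ _ hmid _ (ChainList.nil d))
    refine ⟨mkGen (p ⊓ m) (d ⊓ m) :: cl', mkGen (p ⊔ m) (d ⊔ m) :: ch',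
      mkGen p (p ⊔ d ⊓ m) ::ₘ mkGen (p ⊔ d ⊓ m) d ::ₘ S', ?_, ?_, ?_, ?_⟩
    · exact ChainList.cons _ _ _ (inf_le_inf_right m h) _ hcl'
    · exact ChainList.cons _ _ _ (sup_le_sup_right h m) _ hch'
    · have e2 : (([mkGen p (p ⊔ d ⊓ m), mkGen (p ⊔ d ⊓ m) d] : List (DimGen L)) : Multiset (DimGen L)) + S' =
          mkGen p (p ⊔ d ⊓ m) ::ₘ mkGen (p ⊔ d ⊓ m) d ::ₘ S' := by
        rw [← Multiset.cons_coe, ← Multiset.cons_coe, Multiset.coe_nil, Multiset.cons_add,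
          Multiset.cons_add, zero_add]
      have := subdiv_cons hsub hS'
      rw [e2] at this
      rwa [Multiset.cons_coe] at this
    · have e : ((mkGen (p ⊓ m) (d ⊓ m) :: cl' : List (DimGen L)) : Multiset (DimGen L)) +
          ((mkGen (p ⊔ m) (d ⊔ m) :: ch' : List (DimGen L)) : Multiset (DimGen L)) =
          mkGen (p ⊓ m) (d ⊓ m) ::ₘ mkGen (p ⊔ m) (d ⊔ m) ::ₘ
            ((cl' : Multiset (DimGen L)) + (ch' : Multiset (DimGen L))) := by
        rw [← Multiset.cons_coe, ← Multiset.cons_coe, Multiset.cons_add, Multiset.add_cons]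
      rw [e]
      exact (hrel'.cons (proj_symm (persp_proj key2))).cons (persp_proj key1)

end Schreier
section Main

variable {L : Type*} [Lattice L] [IsModularLattice L]

lemma rel_proj_refl (M : Multiset (DimGen L)) : Multiset.Rel Proj M M := by
  induction M using Multiset.induction_on with
  | empty => exact Multiset.Rel.zero
  | cons g M ih => exact ih.cons (proj_refl g)

/-- Schreier refinement for chains in a modular lattice. -/
lemma schreier {p q : L} {c₁ : List (DimGen L)} (h₁ : ChainList p q c₁) :
    ∀ c₂ : List (DimGen L), ChainList p q c₂ →
      ∃ S₁ S₂ : Multiset (DimGen L), Subdiv (c₁ : Multiset (DimGen L)) S₁ ∧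
        Subdiv (c₂ : Multiset (DimGen L)) S₂ ∧ Multiset.Rel Proj S₁ S₂ := by
  induction h₁ with
  | nil x =>
    intro c₂ h₂
    refine ⟨0, 0, by simpa using subdiv_zero, chain_degenerate h₂ le_rfl, Multiset.Rel.zero⟩
  | cons p m q h l hl ih =>
    intro c₂ h₂
    obtain ⟨cl, ch, S₂', hcl, hch, hS₂', hrel'⟩ := cut h₂ m hl.le
    rw [inf_eq_left.2 h] at hcl
    rw [sup_eq_right.2 h] at hch
    obtain ⟨T₁, Th, hT₁, hTh, hrelT⟩ := ih ch hch
    obtain ⟨S₂'', hS₂'', hrel''⟩ :=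
      transfer (rel_proj_symm hrel') (↑cl + Th) (subdiv_add (subdiv_refl _) hTh)
    refine ⟨(cl : Multiset (DimGen L)) + T₁, S₂'', ?_, subdiv_trans hS₂' hS₂'', ?_⟩
    · rw [← Multiset.cons_coe]
      exact subdiv_cons (GC_of_chain h hcl) hT₁
    · exact Multiset.Rel.trans _ ((rel_proj_refl _).add hrelT) (rel_proj_symm hrel'')

/-- two subdivisions of the same multiset admit projectively matched refinements -/
lemma common_aux {N : Multiset (DimGen L)} {C : Multiset (List (DimGen L))}
    (hrel : Multiset.Rel GC N C) :
    ∀ S', Subdiv N S' → ∃ T T', Subdiv (chainsSum C) T ∧ Subdiv S' T' ∧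
      Multiset.Rel Proj T T' := by
  induction hrel with
  | zero =>
    intro S' hS'
    rw [subdiv_zero_left hS']
    exact ⟨0, 0, by rw [chainsSum_zero]; exact subdiv_zero, subdiv_zero, Multiset.Rel.zero⟩
  | @cons g c N C hgc hrel ih =>
    intro S' hS'
    obtain ⟨c', S'', hgc', hS'', rfl⟩ := subdiv_cons_left hS'
    obtain ⟨Sc, Sc', hSc, hSc', hrelc⟩ := schreier hgc c' hgc'
    obtain ⟨T₀, T₀', hT₀, hT₀', hrel₀⟩ := ih S'' hS''
    exact ⟨Sc + T₀, Sc' + T₀', by rw [chainsSum_cons]; exact subdiv_add hSc hT₀,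
      subdiv_add hSc' hT₀', hrelc.add hrel₀⟩

lemma common {N S S' : Multiset (DimGen L)} (h : Subdiv N S) (h' : Subdiv N S') :
    ∃ T T', Subdiv S T ∧ Subdiv S' T' ∧ Multiset.Rel Proj T T' := by
  obtain ⟨C, hrel, rfl⟩ := h
  exact common_aux hrel S' h'

/-- the refinement relation -/
def RRel (M N : Multiset (DimGen L)) : Prop :=
  ∃ S T, Subdiv M S ∧ Subdiv N T ∧ Multiset.Rel Proj S T

lemma rrel_refl (M : Multiset (DimGen L)) : RRel M M :=
  ⟨M, M, subdiv_refl M, subdiv_refl M, rel_proj_refl M⟩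

lemma rrel_symm {M N : Multiset (DimGen L)} (h : RRel M N) : RRel N M := by
  obtain ⟨S, T, h1, h2, h3⟩ := h
  exact ⟨T, S, h2, h1, rel_proj_symm h3⟩

lemma rrel_trans {M N P : Multiset (DimGen L)} (h : RRel M N) (h' : RRel N P) : RRel M P := by
  obtain ⟨SM, SN, hM, hN, hrel1⟩ := h
  obtain ⟨SN', SP, hN', hP, hrel2⟩ := h'
  obtain ⟨T, T', hT, hT', hrelT⟩ := common hN hN'
  obtain ⟨SM₂, hSM₂, hrelM⟩ := transfer hrel1 T hT
  obtain ⟨SP₂, hSP₂, hrelP⟩ := transfer (rel_proj_symm hrel2) T' hT'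
  refine ⟨SM₂, SP₂, subdiv_trans hM hSM₂, subdiv_trans hP hSP₂, ?_⟩
  exact Multiset.Rel.trans _ hrelM (Multiset.Rel.trans _ hrelT (rel_proj_symm hrelP))

lemma rrel_add {M M' N N' : Multiset (DimGen L)} (h : RRel M N) (h' : RRel M' N') :
    RRel (M + M') (N + N') := by
  obtain ⟨S, T, h1, h2, h3⟩ := h
  obtain ⟨S', T', h1', h2', h3'⟩ := h'
  exact ⟨S + S', T + T', subdiv_add h1 h1', subdiv_add h2 h2', h3.add h3'⟩

/-- the refinement congruence on the free monoid -/
def ProjCon (L : Type*) [Lattice L] [IsModularLattice L] : AddCon (DimFree L) where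
  r γ δ := RRel (Finsupp.toMultiset γ) (Finsupp.toMultiset δ)
  iseqv := ⟨fun γ => rrel_refl _, rrel_symm, rrel_trans⟩
  add' := fun h h' => by
    rw [map_add, map_add]
    exact rrel_add h h'

lemma toMultiset_single_one (g : DimGen L) :
    Finsupp.toMultiset (Finsupp.single g 1) = {g} := by
  rw [Finsupp.toMultiset_single, one_nsmul]

lemma dimCon_le_projCon : DimCon L ≤ ProjCon L := by
  refine AddCon.addConGen_le.2 ?_
  intro γ δ h
  cases h with
  | d0 x =>
    show RRel _ _
    rw [map_zero, toMultiset_single_one]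
    refine ⟨0, 0, ?_, subdiv_zero, Multiset.Rel.zero⟩
    have h0 : GC (⟨(x, x), le_rfl⟩ : DimGen L) ([] : List (DimGen L)) := ChainList.nil x
    simpa using subdiv_cons h0 subdiv_zero
  | d1 x y z hxy hyz =>
    show RRel _ _
    rw [map_add, toMultiset_single_one, toMultiset_single_one, toMultiset_single_one]
    refine ⟨{(⟨(x, y), hxy⟩ : DimGen L)} + {(⟨(y, z), hyz⟩ : DimGen L)}, _, ?_,
      subdiv_refl _, rel_proj_refl _⟩
    have h0 : GC (⟨(x, z), hxy.trans hyz⟩ : DimGen L)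
        ([⟨(x, y), hxy⟩, ⟨(y, z), hyz⟩] : List (DimGen L)) := by
      show ChainList x z _
      rw [genEq hxy, genEq hyz]
      exact ChainList.cons _ _ _ hxy _ (ChainList.cons _ _ _ hyz _ (ChainList.nil z))
    have := subdiv_single h0
    rw [show ((([⟨(x, y), hxy⟩, ⟨(y, z), hyz⟩] : List (DimGen L))) : Multiset (DimGen L)) =
      {(⟨(x, y), hxy⟩ : DimGen L)} + {(⟨(y, z), hyz⟩ : DimGen L)} from rfl] at this
    exact this
  | d2 x y =>
    show RRel _ _
    rw [toMultiset_single_one, toMultiset_single_one]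
    refine ⟨{(⟨(x ⊓ y, x), inf_le_left⟩ : DimGen L)}, {(⟨(y, x ⊔ y), le_sup_right⟩ : DimGen L)},
      subdiv_refl _, subdiv_refl _, ?_⟩
    refine Multiset.Rel.cons ?_ Multiset.Rel.zero
    refine persp_proj ⟨x, y, ?_, ?_⟩
    · exact genEq inf_le_left
    · exact genEq le_sup_right

end Main
section Classes

variable {L : Type*} [Lattice L]

/-- class of a generator in the dimension monoid -/
noncomputable def cls (g : DimGen L) : DimMonoid L := (DimCon L).mk' (Finsupp.single g 1)

/-- sum of classes of a multiset of generators -/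
noncomputable def clsM (M : Multiset (DimGen L)) : DimMonoid L := (M.map cls).sum

@[simp] lemma clsM_zero : clsM (0 : Multiset (DimGen L)) = 0 := rfl

@[simp] lemma clsM_cons (g : DimGen L) (M : Multiset (DimGen L)) :
    clsM (g ::ₘ M) = cls g + clsM M := by simp [clsM]

@[simp] lemma clsM_add (M N : Multiset (DimGen L)) : clsM (M + N) = clsM M + clsM N := by
  simp [clsM]

lemma dimDelta_eq_cls (x y : L) : dimDelta x y = cls (mkGen x y) := rfl

lemma con_of_dimRel {γ δ : DimFree L} (h : DimRel L γ δ) : DimCon L γ δ :=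
  AddConGen.Rel.of _ _ h

lemma mk'_eq_of_con {γ δ : DimFree L} (h : DimCon L γ δ) :
    (DimCon L).mk' γ = (DimCon L).mk' δ :=
  (AddCon.eq _).2 h

lemma cls_degenerate (x : L) : cls (mkGen x x) = 0 := by
  rw [← genEq le_rfl]
  have h := mk'_eq_of_con (con_of_dimRel (DimRel.d0 x))
  rwa [map_zero] at h

lemma dimDelta_self (x : L) : dimDelta x x = 0 := cls_degenerate x

lemma cls_d1 {x y z : L} (hxy : x ≤ y) (hyz : y ≤ z) :
    cls (mkGen x z) = cls (mkGen x y) + cls (mkGen y z) := by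
  rw [← genEq (hxy.trans hyz), ← genEq hxy, ← genEq hyz]
  have h := mk'_eq_of_con (con_of_dimRel (DimRel.d1 x y z hxy hyz))
  rwa [map_add] at h

lemma cls_persp {g h : DimGen L} (hp : Persp g h) : cls g = cls h := by
  obtain ⟨x, y, rfl, rfl⟩ := hp
  rw [← genEq (inf_le_left : x ⊓ y ≤ x), ← genEq (le_sup_right : y ≤ x ⊔ y)]
  exact mk'_eq_of_con (con_of_dimRel (DimRel.d2 x y))

lemma cls_proj {g h : DimGen L} (hp : Proj g h) : cls g = cls h := by
  induction hp with
  | rel _ _ h => exact cls_persp h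
  | refl => rfl
  | symm _ _ _ ih => exact ih.symm
  | trans _ _ _ _ _ ih1 ih2 => exact ih1.trans ih2

lemma clsM_rel {S T : Multiset (DimGen L)} (h : Multiset.Rel Proj S T) : clsM S = clsM T := by
  induction h with
  | zero => rfl
  | cons hab _ ih => rw [clsM_cons, clsM_cons, cls_proj hab, ih]

lemma cls_chain {x y : L} {c : List (DimGen L)} (hc : ChainList x y c) (h : x ≤ y) :
    cls (mkGen x y) = clsM (c : Multiset (DimGen L)) := by
  induction hc with
  | nil x => rw [Multiset.coe_nil, clsM_zero, cls_degenerate]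
  | cons x m y hxm l hl ih =>
    rw [← Multiset.cons_coe, clsM_cons, cls_d1 hxm hl.le, ih hl.le]

lemma clsM_subdiv {M S : Multiset (DimGen L)} (h : Subdiv M S) : clsM M = clsM S := by
  obtain ⟨C, hrel, rfl⟩ := h
  induction hrel with
  | zero => rw [chainsSum_zero]
  | @cons g c M C hgc hrel ih =>
    rw [chainsSum_cons, clsM_cons, clsM_add, ih]
    congr 1
    have hc : ChainList g.1.1 g.1.2 c := hgc
    have := cls_chain hc g.2
    rwa [← gen_eq_mkGen] at this

lemma mk'_single_eq_clsM (g : DimGen L) (n : ℕ) :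
    (DimCon L).mk' (Finsupp.single g n) = clsM (Finsupp.toMultiset (Finsupp.single g n)) := by
  induction n with
  | zero => simp
  | succ k ihk =>
    rw [show Finsupp.single g (k + 1) = Finsupp.single g k + Finsupp.single g 1 by
      rw [← Finsupp.single_add]]
    rw [map_add, map_add, clsM_add, ihk]
    congr 1
    rw [Finsupp.toMultiset_single, one_nsmul]
    show cls g = clsM {g}
    rw [show ({g} : Multiset (DimGen L)) = g ::ₘ 0 from rfl, clsM_cons, clsM_zero, add_zero]

lemma mk'_eq_clsM (γ : DimFree L) : (DimCon L).mk' γ = clsM (Finsupp.toMultiset γ) := by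
  induction γ using Finsupp.induction with
  | zero => simp [map_zero]
  | single_add g n γ hg hn ih =>
    rw [map_add, map_add, clsM_add, ih, mk'_single_eq_clsM]

end Classes
section Assemble

variable {L : Type*} [Lattice L]

lemma assemble {c : List (DimGen L)} {x y : L} (hc : ChainList x y c) :
    ∀ Ca Cb : Multiset (DimGen L), (c : Multiset (DimGen L)) = Ca + Cb →
    ∃ n : ℕ, 0 < n ∧ ∃ w : ℕ → L, w 0 = x ∧ w (2 * n) = y ∧ (∀ i < 2 * n, w i ≤ w (i + 1)) ∧
      clsM Ca = ∑ i ∈ Finset.range n, dimDelta (w (2 * i)) (w (2 * i + 1)) ∧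
      clsM Cb = ∑ i ∈ Finset.range n, dimDelta (w (2 * i + 1)) (w (2 * i + 2)) := by
  classical
  induction hc with
  | nil x =>
    intro Ca Cb hab
    rw [Multiset.coe_nil] at hab
    obtain ⟨hCa, hCb⟩ := add_eq_zero.1 hab.symm
    subst hCa; subst hCb
    refine ⟨1, one_pos, fun _ => x, rfl, rfl, fun i _ => le_rfl, ?_, ?_⟩ <;>
      rw [Finset.sum_range_one, dimDelta_self, clsM_zero]
  | cons x m y h l hl ih =>
    intro Ca Cb hab
    rw [← Multiset.cons_coe] at hab
    have hg : mkGen x m ∈ Ca + Cb := by rw [← hab]; exact Multiset.mem_cons_self _ _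
    rcases Multiset.mem_add.1 hg with hA | hB
    · -- the first link belongs to the `a` part
      obtain ⟨Ca', rfl⟩ : ∃ Ca', Ca = mkGen x m ::ₘ Ca' :=
        ⟨Ca.erase (mkGen x m), (Multiset.cons_erase hA).symm⟩
      rw [Multiset.cons_add] at hab
      have hl' : (l : Multiset (DimGen L)) = Ca' + Cb := (Multiset.cons_inj_right _).1 hab
      obtain ⟨n', hn', w', hw0, hw2n, hchain, hSa, hSb⟩ := ih _ _ hl'
      refine ⟨n' + 1, Nat.succ_pos _,
        (fun i => match i with | 0 => x | 1 => m | (j+2) => w' j), rfl, ?_, ?_, ?_, ?_⟩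
      · rw [show 2 * (n' + 1) = 2 * n' + 2 from by ring]
        exact hw2n
      · intro i hi
        match i with
        | 0 => exact h
        | 1 => exact le_of_eq hw0.symm
        | (j+2) =>
          show w' j ≤ w' (j + 1)
          exact hchain j (by omega)
      · rw [clsM_cons, Finset.sum_range_succ']
        show cls (mkGen x m) + clsM Ca' =
          (∑ i ∈ Finset.range n', dimDelta (w' (2 * i)) (w' (2 * i + 1))) + dimDelta x m
        rw [← hSa]
        exact add_comm _ _
      · rw [Finset.sum_range_succ']
        show clsM Cb =
          (∑ i ∈ Finset.range n', dimDelta (w' (2 * i + 1)) (w' (2 * i + 2))) + dimDelta m (w' 0)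
        rw [hw0, dimDelta_self, add_zero]
        exact hSb
    · -- the first link belongs to the `b` part
      obtain ⟨Cb', rfl⟩ : ∃ Cb', Cb = mkGen x m ::ₘ Cb' :=
        ⟨Cb.erase (mkGen x m), (Multiset.cons_erase hB).symm⟩
      rw [Multiset.add_cons] at hab
      have hl' : (l : Multiset (DimGen L)) = Ca + Cb' := (Multiset.cons_inj_right _).1 hab
      obtain ⟨n', hn', w', hw0, hw2n, hchain, hSa, hSb⟩ := ih _ _ hl'
      refine ⟨n' + 1, Nat.succ_pos _,
        (fun i => match i with | 0 => x | 1 => x | (j+2) => w' j), rfl, ?_, ?_, ?_, ?_⟩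
      · rw [show 2 * (n' + 1) = 2 * n' + 2 from by ring]
        exact hw2n
      · intro i hi
        match i with
        | 0 => exact le_rfl
        | 1 =>
          show x ≤ w' 0
          rw [hw0]; exact h
        | (j+2) =>
          show w' j ≤ w' (j + 1)
          exact hchain j (by omega)
      · rw [Finset.sum_range_succ']
        show clsM Ca =
          (∑ i ∈ Finset.range n', dimDelta (w' (2 * i)) (w' (2 * i + 1))) + dimDelta x x
        rw [dimDelta_self, add_zero]
        exact hSa
      · rw [clsM_cons, Finset.sum_range_succ']
        show cls (mkGen x m) + clsM Cb' =
          (∑ i ∈ Finset.range n', dimDelta (w' (2 * i + 1)) (w' (2 * i + 2))) + dimDelta x (w' 0)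
        rw [hw0, ← hSb]
        exact add_comm _ _

end Assemble

/-- **Lemma 1.3.** In a modular lattice, any decomposition `a + b = Δ(u,v)` in the
dimension monoid is realized by a finite chain from `u` to `v` whose alternating
links sum up to `a` and `b` respectively. -/
theorem dim_decomposition_of_modular {L : Type*} [Lattice L] [IsModularLattice L]
    {u v : L} (huv : u ≤ v) (a b : DimMonoid L) (h : a + b = dimDelta u v) :
    ∃ n : ℕ, 0 < n ∧ ∃ w : ℕ → L,
      w 0 = u ∧ w (2 * n) = v ∧ (∀ i < 2 * n, w i ≤ w (i + 1)) ∧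
      a = ∑ i ∈ Finset.range n, dimDelta (w (2 * i)) (w (2 * i + 1)) ∧
      b = ∑ i ∈ Finset.range n, dimDelta (w (2 * i + 1)) (w (2 * i + 2)) := by
  obtain ⟨α, rfl⟩ := AddCon.mk'_surjective (c := DimCon L) a
  obtain ⟨β, rfl⟩ := AddCon.mk'_surjective (c := DimCon L) b
  rw [← map_add] at h
  have hcon : DimCon L (α + β) (Finsupp.single (mkGen u v) 1) := (AddCon.eq _).1 h
  have hrr : RRel (Finsupp.toMultiset (α + β))
      (Finsupp.toMultiset (Finsupp.single (mkGen u v) 1)) :=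
    AddCon.le_def.1 dimCon_le_projCon hcon
  rw [map_add, toMultiset_single_one] at hrr
  obtain ⟨S, T, hS, hT, hrel⟩ := hrr
  -- unpack the subdivision of the single generator: a chain of [u, v]
  rw [show ({mkGen u v} : Multiset (DimGen L)) = mkGen u v ::ₘ 0 from rfl] at hT
  obtain ⟨c, T₀, hgc, hT₀, rfl⟩ := subdiv_cons_left hT
  rw [subdiv_zero_left hT₀, add_zero] at hrel
  have hc : ChainList u v c := by
    have h3 : ChainList ((mkGen u v).1.1) ((mkGen u v).1.2) c := hgc
    rwa [mkGen_fst huv, mkGen_snd huv] at h3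
  -- split the left subdivision between α and β
  obtain ⟨Sα, Sβ, hSα, hSβ, rfl⟩ := subdiv_add_left hS
  -- split the chain links accordingly
  obtain ⟨Ca, Cb, hra, hrb, hsplit⟩ := Multiset.rel_add_left.1 hrel
  have ha : (DimCon L).mk' α = clsM Ca := by
    rw [mk'_eq_clsM, clsM_subdiv hSα, clsM_rel hra]
  have hb : (DimCon L).mk' β = clsM Cb := by
    rw [mk'_eq_clsM, clsM_subdiv hSβ, clsM_rel hrb]
  obtain ⟨n, hn, w, hw0, hw2n, hchain, hsa, hsb⟩ := assemble hc Ca Cb hsplit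
  exact ⟨n, hn, w, hw0, hw2n, hchain, ha.trans hsa, hb.trans hsb⟩
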